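/- If a sequence of continuous curves γᵢ : [0,1] → ℝⁿ converges to γ in Fréchet distance and all curves have total curvature bounded above by a common constant M, then Len(γᵢ) → Len(γ). -/

import Mathlib

noncomputable section

/-- Sum of the exterior turning angles of the polygonal path through the given
list of vertices. -/
def turnSum {n : ℕ} : List (EuclideanSpace ℝ (Fin n)) → ℝ
  | a :: b :: c :: rest =>
      InnerProductGeometry.angle (b - a) (c - b) + turnSum (b :: c :: rest)
  | _ => 0

/-- The set of turning-angle sums of polygons inscribed in `γ`, with vertex
parameters drawn (in increasing order) from `[0,1]`. -/
def tcSet {n : ℕ} (γ : ℝ → EuclideanSpace ℝ (Fin n)) : Set ℝ :=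
  {x | ∃ t : List ℝ, t.Chain' (· < ·) ∧ (∀ u ∈ t, u ∈ Set.Icc (0:ℝ) 1) ∧
    x = turnSum (t.map γ)}

/-- The total curvature of the curve `γ : [0,1] → ℝⁿ`: the supremum of the
turning-angle sums of inscribed polygons. -/
def totCurv {n : ℕ} (γ : ℝ → EuclideanSpace ℝ (Fin n)) : ℝ := sSup (tcSet γ)

/-- The arclength of the curve `γ : [0,1] → ℝⁿ`. -/
def len {n : ℕ} (γ : ℝ → EuclideanSpace ℝ (Fin n)) : ℝ :=
  (eVariationOn γ (Set.Icc 0 1)).toReal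

/-- The Fréchet distance between the curves `K, L : [0,1] → ℝⁿ`: the infimum
over (strictly monotone, continuous, endpoint-preserving) reparametrizations
`σ` of the supremum of `‖K t − L (σ t)‖`. -/
def frechetDist {n : ℕ} (K L : ℝ → EuclideanSpace ℝ (Fin n)) : ℝ :=
  ⨅ σ : {f : ℝ → ℝ // ContinuousOn f (Set.Icc 0 1) ∧
      StrictMonoOn f (Set.Icc 0 1) ∧ f 0 = 0 ∧ f 1 = 1},
    ⨆ t : Set.Icc (0:ℝ) 1, ‖K t - L (σ.1 t)‖

/-! ### Auxiliary geometric lemmas -/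

open InnerProductGeometry Real

section Geom

variable {V : Type*} [NormedAddCommGroup V] [InnerProductSpace ℝ V]
local notation "⟪" x ", " y "⟫" => @inner ℝ _ _ x y

/-- normalized vector (`0` if `u = 0`) -/
def nz (u : V) : V := ‖u‖⁻¹ • u

lemma nz_norm_le (u : V) : ‖nz u‖ ≤ 1 := by
  rcases eq_or_ne u 0 with h | h
  · simp [nz, h]
  · simp [nz, norm_smul, abs_of_nonneg (inv_nonneg.2 (norm_nonneg u)),
      inv_mul_cancel₀ (norm_ne_zero_iff.2 h)]

lemma inner_nz (u : V) : ⟪u, nz u⟫ = ‖u‖ := by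
  rcases eq_or_ne u 0 with h | h
  · simp [nz, h]
  · have : ‖u‖ ≠ 0 := norm_ne_zero_iff.2 h
    rw [nz, real_inner_smul_right, real_inner_self_eq_norm_sq]
    field_simp

lemma inner_le_d {v e : V} (d : ℝ) (hv : ‖v‖ ≤ d) (he : ‖e‖ ≤ 1) : ⟪v, e⟫ ≤ d := by
  calc ⟪v, e⟫ ≤ ‖v‖ * ‖e‖ := real_inner_le_norm v e
    _ ≤ d * 1 := by
        apply mul_le_mul hv he (norm_nonneg _) (le_trans (norm_nonneg _) hv)
    _ = d := mul_one d

lemma nz_sub_nz_le_angle (u w : V) : ‖nz u - nz w‖ ≤ angle u w := by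
  rcases eq_or_ne u 0 with hu | hu
  · rw [hu, angle_zero_left]
    have : ‖nz (0:V) - nz w‖ ≤ 1 := by simpa [nz] using nz_norm_le w
    linarith [pi_gt_three]
  rcases eq_or_ne w 0 with hw | hw
  · rw [hw, angle_zero_right]
    have : ‖nz u - nz (0:V)‖ ≤ 1 := by simpa [nz] using nz_norm_le u
    linarith [pi_gt_three]
  · have hnu : ‖u‖ ≠ 0 := norm_ne_zero_iff.2 hu
    have hnw : ‖w‖ ≠ 0 := norm_ne_zero_iff.2 hw
    have h1 : ‖nz u‖ = 1 := by
      simp [nz, norm_smul, abs_of_nonneg (inv_nonneg.2 (norm_nonneg u)),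
        inv_mul_cancel₀ hnu]
    have h2 : ‖nz w‖ = 1 := by
      simp [nz, norm_smul, abs_of_nonneg (inv_nonneg.2 (norm_nonneg w)),
        inv_mul_cancel₀ hnw]
    have hinner : ⟪nz u, nz w⟫ = Real.cos (angle u w) := by
      rw [cos_angle]
      rw [nz, nz, real_inner_smul_left, real_inner_smul_right]
      field_simp
    have hsq : ‖nz u - nz w‖ ^ 2 = 2 - 2 * Real.cos (angle u w) := by
      rw [← real_inner_self_eq_norm_sq]
      have hinner' : ⟪nz w, nz u⟫ = Real.cos (angle u w) := by
        rw [real_inner_comm]; exact hinner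
      rw [inner_sub_sub_self, hinner, hinner',
        real_inner_self_eq_norm_sq, real_inner_self_eq_norm_sq, h1, h2]
      ring
    have hcos := Real.one_sub_sq_div_two_le_cos (x := angle u w)
    have hsq2 : ‖nz u - nz w‖ ^ 2 ≤ (angle u w) ^ 2 := by
      rw [hsq]; nlinarith
    nlinarith [norm_nonneg (nz u - nz w), angle_nonneg u w]

/-- per-edge estimate -/
lemma edge_est (a0 a1 b0 b1 : V) :
    ‖a1 - a0‖ ≤ ‖b1 - b0‖ + ⟪b0 - a0, nz (a1 - a0)⟫ - ⟪b1 - a1, nz (a1 - a0)⟫ := by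
  set e := nz (a1 - a0) with he
  have h1 : ⟪a1 - a0, e⟫ = ‖a1 - a0‖ := inner_nz _
  have h2 : (a1 - a0 : V) = (b1 - b0) + (b0 - a0) - (b1 - a1) := by abel
  have h3 : ⟪b1 - b0, e⟫ ≤ ‖b1 - b0‖ := by
    calc ⟪b1 - b0, e⟫ ≤ ‖b1 - b0‖ * ‖e‖ := real_inner_le_norm _ _
      _ ≤ ‖b1 - b0‖ * 1 := mul_le_mul_of_nonneg_left (nz_norm_le _) (norm_nonneg _)
      _ = _ := mul_one _
  have h4 : ⟪a1 - a0, e⟫ = ⟪b1 - b0, e⟫ + ⟪b0 - a0, e⟫ - ⟪b1 - a1, e⟫ := by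
    rw [h2, inner_sub_left, inner_add_left]
  linarith [h1, h4, h3]

/-- The length of the polygon through the given list of vertices. -/
def polyLen : List V → ℝ
  | a :: b :: rest => ‖b - a‖ + polyLen (b :: rest)
  | _ => 0

omit [InnerProductSpace ℝ V] in
lemma polyLen_nonneg : ∀ l : List V, 0 ≤ polyLen l
  | [] => le_refl 0
  | [_] => le_refl 0
  | _ :: b :: rest => add_nonneg (norm_nonneg _) (polyLen_nonneg (b :: rest))

/-- last two elements of `x :: y :: l` -/
def lastPair {α : Type*} (x y : α) : List α → α × α
  | [] => (x, y)
  | z :: r => lastPair y z r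

lemma lastPair_snd_mem {α : Type*} : ∀ (l : List α) (x y : α),
    (lastPair x y l).2 ∈ y :: l
  | [], _, _ => List.mem_cons_self
  | z :: r, x, y => by
      have := lastPair_snd_mem r y z
      simp only [lastPair]
      rcases List.mem_cons.1 this with h | h
      · exact List.mem_cons_of_mem _ (by rw [h]; exact List.mem_cons_self)
      · exact List.mem_cons_of_mem _ (List.mem_cons_of_mem _ h)

end Geom

section Core

variable {n : ℕ}
local notation "E" => EuclideanSpace ℝ (Fin n)
local notation "⟪" x ", " y "⟫" => @inner ℝ _ _ x y

lemma turnSum_nonneg : ∀ l : List E, 0 ≤ turnSum l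
  | [] => le_refl 0
  | [_] => le_refl 0
  | [_, _] => le_refl 0
  | _ :: b :: c :: rest =>
      add_nonneg (angle_nonneg _ _) (turnSum_nonneg (b :: c :: rest))

/-- Core comparison lemma by induction. -/
lemma core (d : ℝ) (hd : 0 ≤ d) :
    ∀ (l : List (E × E)) (p0 p1 : E × E),
      ‖p0.1 - p0.2‖ ≤ d → ‖p1.1 - p1.2‖ ≤ d → (∀ p ∈ l, ‖p.1 - p.2‖ ≤ d) →
      polyLen (List.map Prod.fst (p0 :: p1 :: l)) ≤
        polyLen (List.map Prod.snd (p0 :: p1 :: l))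
        + ⟪p0.2 - p0.1, nz (p1.1 - p0.1)⟫
        - ⟪(lastPair p0 p1 l).2.2 - (lastPair p0 p1 l).2.1,
            nz ((lastPair p0 p1 l).2.1 - (lastPair p0 p1 l).1.1)⟫
        + d * turnSum (List.map Prod.fst (p0 :: p1 :: l))
  | [], p0, p1, h0, h1, _ => by
      simp only [List.map, lastPair, polyLen, turnSum]
      have := edge_est p0.1 p1.1 p0.2 p1.2
      linarith
  | p2 :: l, p0, p1, h0, h1, hl => by
      have h2 : ‖p2.1 - p2.2‖ ≤ d := hl p2 (List.mem_cons_self)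
      have hl' : ∀ p ∈ l, ‖p.1 - p.2‖ ≤ d := fun p hp => hl p (List.mem_cons_of_mem _ hp)
      have IH := core d hd l p1 p2 h1 h2 hl'
      have hedge := edge_est p0.1 p1.1 p0.2 p1.2
      have hlp : lastPair p0 p1 (p2 :: l) = lastPair p1 p2 l := rfl
      have hturn : ⟪p1.2 - p1.1, nz (p2.1 - p1.1)⟫ - ⟪p1.2 - p1.1, nz (p1.1 - p0.1)⟫
          ≤ d * angle (p1.1 - p0.1) (p2.1 - p1.1) := by
        have heq : ⟪p1.2 - p1.1, nz (p2.1 - p1.1)⟫ - ⟪p1.2 - p1.1, nz (p1.1 - p0.1)⟫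
            = ⟪p1.2 - p1.1, nz (p2.1 - p1.1) - nz (p1.1 - p0.1)⟫ := by
          rw [inner_sub_right]
        rw [heq]
        calc ⟪p1.2 - p1.1, nz (p2.1 - p1.1) - nz (p1.1 - p0.1)⟫
            ≤ ‖p1.2 - p1.1‖ * ‖nz (p2.1 - p1.1) - nz (p1.1 - p0.1)‖ := real_inner_le_norm _ _
          _ ≤ d * angle (p1.1 - p0.1) (p2.1 - p1.1) := by
              apply mul_le_mul
              · rw [norm_sub_rev]; exact h1
              · rw [angle_comm]
                exact nz_sub_nz_le_angle _ _
              · exact norm_nonneg _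
              · exact hd
      simp only [List.map, polyLen, turnSum, hlp] at *
      linarith

/-- Packaged core lemma: for any list of point pairs within distance `d`. -/
lemma core' (d : ℝ) (hd : 0 ≤ d) (l : List (E × E))
    (hl : ∀ p ∈ l, ‖p.1 - p.2‖ ≤ d) :
    polyLen (List.map Prod.fst l) ≤
      polyLen (List.map Prod.snd l) + d * (turnSum (List.map Prod.fst l) + 2) := by
  match l with
  | [] =>
      simp only [List.map, polyLen, turnSum]
      have : (0:ℝ) ≤ d * (0 + 2) := mul_nonneg hd (by norm_num)
      simpa using this
  | [p] =>
      simp only [List.map, polyLen, turnSum]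
      have : (0:ℝ) ≤ d * (0 + 2) := mul_nonneg hd (by norm_num)
      simpa using this
  | p0 :: p1 :: l =>
      have h0 := hl p0 (List.mem_cons_self)
      have h1 := hl p1 (List.mem_cons_of_mem _ (List.mem_cons_self))
      have hl' : ∀ p ∈ l, ‖p.1 - p.2‖ ≤ d := fun p hp =>
        hl p (List.mem_cons_of_mem _ (List.mem_cons_of_mem _ hp))
      have H := core d hd l p0 p1 h0 h1 hl'
      have hb1 : ⟪p0.2 - p0.1, nz (p1.1 - p0.1)⟫ ≤ d :=
        inner_le_d d (by rw [norm_sub_rev]; exact h0) (nz_norm_le _)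
      set q := lastPair p0 p1 l with hq
      have hqmem : ‖q.2.1 - q.2.2‖ ≤ d := by
        have := lastPair_snd_mem l p0 p1
        rw [← hq] at this
        rcases List.mem_cons.1 this with h | h
        · rw [h]; exact h1
        · exact hl' _ h
      have hb2 : -⟪q.2.2 - q.2.1, nz (q.2.1 - q.1.1)⟫ ≤ d := by
        have : ⟪-(q.2.2 - q.2.1), nz (q.2.1 - q.1.1)⟫ ≤ d := by
          apply inner_le_d d _ (nz_norm_le _)
          rw [norm_neg, norm_sub_rev]; exact hqmem
        rw [inner_neg_left] at this; linarith
      nlinarith [H, hb1, hb2]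

end Core

section Lists

variable {V : Type*} [NormedAddCommGroup V] [InnerProductSpace ℝ V]

/-- remove consecutive duplicates -/
def dd : List ℝ → List ℝ
  | [] => []
  | [a] => [a]
  | a :: b :: r => if a = b then dd (b :: r) else a :: dd (b :: r)

lemma dd_cons : ∀ (l : List ℝ) (a : ℝ), ∃ r, dd (a :: l) = a :: r
  | [], a => ⟨[], rfl⟩
  | b :: r, a => by
      rcases dd_cons r b with ⟨r', hr'⟩
      by_cases h : a = b
      · exact ⟨r', by rw [dd, if_pos h, hr', h]⟩
      · exact ⟨dd (b :: r), by rw [dd, if_neg h]⟩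

lemma dd_sublist : ∀ l : List ℝ, (dd l).Sublist l
  | [] => List.Sublist.refl _
  | [a] => List.Sublist.refl _
  | a :: b :: r => by
      rw [dd]
      by_cases h : a = b
      · rw [if_pos h]
        exact (dd_sublist (b :: r)).cons _
      · rw [if_neg h]
        exact (dd_sublist (b :: r)).cons₂ _

lemma dd_chain_lt : ∀ l : List ℝ, l.Chain' (· ≤ ·) → (dd l).Chain' (· < ·)
  | [], _ => List.isChain_nil
  | [a], _ => List.isChain_singleton a
  | a :: b :: r, h => by
      have h1 : a ≤ b := (List.isChain_cons_cons.1 h).1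
      have h2 : (b :: r).Chain' (· ≤ ·) := (List.isChain_cons_cons.1 h).2
      rw [dd]
      by_cases hab : a = b
      · rw [if_pos hab]; exact dd_chain_lt _ h2
      · rw [if_neg hab]
        rcases dd_cons r b with ⟨r', hr'⟩
        unfold List.Chain'
        rw [hr', List.isChain_cons_cons]
        refine ⟨lt_of_le_of_ne h1 hab, ?_⟩
        rw [← hr']
        exact dd_chain_lt _ h2

lemma polyLen_map_dd (f : ℝ → V) : ∀ l : List ℝ,
    polyLen (List.map f (dd l)) = polyLen (List.map f l)
  | [] => rfl
  | [a] => rfl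
  | a :: b :: r => by
      rw [dd]
      by_cases hab : a = b
      · rw [if_pos hab]
        have : polyLen (List.map f (a :: b :: r)) = polyLen (List.map f (b :: r)) := by
          simp only [List.map, polyLen, hab, sub_self, norm_zero, zero_add]
        rw [this]; exact polyLen_map_dd f (b :: r)
      · rw [if_neg hab]
        rcases dd_cons r b with ⟨r', hr'⟩
        simp only [List.map, hr', polyLen]
        congr 1
        have := polyLen_map_dd f (b :: r)
        rw [hr'] at this
        simpa using this

lemma sum_eq_polyLen (f : ℝ → V) : ∀ (n : ℕ) (u : ℕ → ℝ),
    ∑ i ∈ Finset.range n, edist (f (u (i + 1))) (f (u i))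
      = ENNReal.ofReal (polyLen (List.map f (List.map u (List.range (n + 1)))))
  | 0, u => by simp [polyLen, List.range_succ_eq_map]
  | n + 1, u => by
      rw [Finset.sum_range_succ' (fun i => edist (f (u (i + 1))) (f (u i)))]
      rw [sum_eq_polyLen f n (fun i => u (i + 1))]
      have h1 : List.map u (List.range (n + 2))
          = u 0 :: List.map (fun i => u (i + 1)) (List.range (n + 1)) := by
        rw [List.range_succ_eq_map]
        simp [List.map_map, Function.comp_def]
      have h2 : List.map (fun i => u (i + 1)) (List.range (n + 1))
          = u 1 :: List.map (fun i => u (i + 1 + 1)) (List.range n) := by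
        rw [List.range_succ_eq_map]
        simp [List.map_map, Function.comp_def]
      rw [h1, h2]
      simp only [List.map, polyLen]
      rw [ENNReal.ofReal_add (norm_nonneg _) (polyLen_nonneg _), add_comm]
      congr 1
      rw [edist_dist, dist_eq_norm]

lemma map_getD_range {α : Type*} (l : List α) (d : α) :
    List.map (fun i => l.getD i d) (List.range l.length) = l := by
  apply List.ext_getElem
  · simp
  · intro i h1 h2
    simp [List.getD_eq_getElem, List.getElem?_eq_getElem h2]

lemma polyLen_le_eVariation (f : ℝ → V) (s : Set ℝ) (l : List ℝ)
    (hc : l.Chain' (· ≤ ·)) (hs : ∀ x ∈ l, x ∈ s) :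
    ENNReal.ofReal (polyLen (List.map f l)) ≤ eVariationOn f s := by
  match l with
  | [] => simp [polyLen]
  | [a] => simp [polyLen]
  | a :: r =>
    set L := a :: r with hL
    have hne : L ≠ [] := by simp [hL]
    set u : ℕ → ℝ := fun i => L.getD i (L.getLast hne) with hu
    have hp : L.Pairwise (· ≤ ·) := List.isChain_iff_pairwise.1 hc
    have hget : ∀ i j (hi : i < L.length) (hj : j < L.length), i ≤ j → L[i] ≤ L[j] := by
      intro i j hi hj hij
      rcases eq_or_lt_of_le hij with h | h
      · subst h; exact le_refl _
      · exact List.pairwise_iff_getElem.1 hp i j hi hj h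
    have hlastlt : L.length - 1 < L.length := by
      have : 0 < L.length := List.length_pos_iff.2 hne
      omega
    have humono : Monotone u := by
      intro i j hij
      rw [hu]
      simp only
      rcases lt_or_ge j L.length with hj | hj
      · have hi : i < L.length := lt_of_le_of_lt hij hj
        rw [List.getD_eq_getElem _ _ hi, List.getD_eq_getElem _ _ hj]
        exact hget i j hi hj hij
      · rw [List.getD_eq_default _ _ hj, List.getLast_eq_getElem]
        rcases lt_or_ge i L.length with hi | hi
        · rw [List.getD_eq_getElem _ _ hi]
          exact hget i (L.length - 1) hi hlastlt (by omega)
        · rw [List.getD_eq_default _ _ hi]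
    have humem : ∀ i, u i ∈ s := by
      intro i
      rw [hu]
      simp only
      rcases lt_or_ge i L.length with hi | hi
      · rw [List.getD_eq_getElem _ _ hi]
        exact hs _ (List.getElem_mem hi)
      · rw [List.getD_eq_default _ _ hi]
        exact hs _ (List.getLast_mem hne)
    have hkey := eVariationOn.sum_le (f := f) (n := L.length - 1) humono humem
    have hlen : L.length - 1 + 1 = L.length := by
      have : 0 < L.length := List.length_pos_iff.2 hne
      omega
    have := sum_eq_polyLen f (L.length - 1) u
    rw [this, hlen] at hkey
    have hmap : List.map u (List.range L.length) = L := map_getD_range L _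
    rw [hmap] at hkey
    exact hkey

end Lists

section Main

variable {n : ℕ}
local notation "E" => EuclideanSpace ℝ (Fin n)

lemma chain_map_mono {σ : ℝ → ℝ} {s : Set ℝ} (hσ : MonotoneOn σ s) :
    ∀ t : List ℝ, t.Chain' (· ≤ ·) → (∀ x ∈ t, x ∈ s) → (t.map σ).Chain' (· ≤ ·)
  | [], _, _ => List.isChain_nil
  | [a], _, _ => List.isChain_singleton _
  | a :: b :: r, h, hm => by
      unfold List.Chain'
      rw [List.map_cons, List.map_cons, List.isChain_cons_cons]
      constructor
      · exact hσ (hm a (by simp)) (hm b (by simp)) (List.isChain_cons_cons.1 h).1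
      · have := chain_map_mono hσ (b :: r) (List.isChain_cons_cons.1 h).2
          (fun x hx => hm x (List.mem_cons_of_mem _ hx))
        simpa [List.Chain'] using this

/-- The one-sided length comparison lemma. -/
lemma len_le_aux (K L : ℝ → E) (σ : ℝ → ℝ) (d M' : ℝ)
    (hd : 0 ≤ d) (hM' : 0 ≤ M')
    (hσmap : Set.MapsTo σ (Set.Icc 0 1) (Set.Icc 0 1))
    (hσm : MonotoneOn σ (Set.Icc 0 1))
    (hKtc : ∀ x ∈ tcSet K, x ≤ M')
    (hL : eVariationOn L (Set.Icc 0 1) ≠ ⊤)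
    (hclose : ∀ t ∈ Set.Icc (0:ℝ) 1, ‖K t - L (σ t)‖ ≤ d) :
    len K ≤ len L + d * (M' + 2) := by
  have hRHS : (0:ℝ) ≤ len L + d * (M' + 2) := by
    have : (0:ℝ) ≤ len L := ENNReal.toReal_nonneg
    nlinarith
  have hbound : eVariationOn K (Set.Icc 0 1) ≤ ENNReal.ofReal (len L + d * (M' + 2)) := by
    rw [eVariationOn]
    apply iSup_le
    rintro ⟨m, u, hu, hus⟩
    rw [sum_eq_polyLen K m u]
    apply ENNReal.ofReal_le_ofReal
    set l0 : List ℝ := List.map u (List.range (m + 1)) with hl0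
    have hl0chain : l0.Chain' (· ≤ ·) := by
      unfold List.Chain'
      rw [hl0, List.isChain_map]
      rw [List.isChain_range_succ]
      intro i _
      exact hu (Nat.le_succ i)
    have hl0mem : ∀ x ∈ l0, x ∈ Set.Icc (0:ℝ) 1 := by
      intro x hx
      rcases List.mem_map.1 hx with ⟨i, _, rfl⟩
      exact hus i
    set t : List ℝ := dd l0 with ht
    have htchain : t.Chain' (· < ·) := dd_chain_lt l0 hl0chain
    have htmem : ∀ x ∈ t, x ∈ Set.Icc (0:ℝ) 1 := fun x hx =>
      hl0mem x ((dd_sublist l0).subset hx)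
    have hpoly : polyLen (List.map K l0) = polyLen (List.map K t) :=
      (polyLen_map_dd K l0).symm
    rw [hpoly]
    -- apply the core lemma to the pair list
    set pl : List (E × E) := t.map (fun x => (K x, L (σ x))) with hpl
    have hplclose : ∀ p ∈ pl, ‖p.1 - p.2‖ ≤ d := by
      intro p hp
      rcases List.mem_map.1 hp with ⟨x, hx, rfl⟩
      exact hclose x (htmem x hx)
    have hfst : List.map Prod.fst pl = List.map K t := by
      rw [hpl, List.map_map]; rfl
    have hsnd : List.map Prod.snd pl = List.map L (List.map σ t) := by
      rw [hpl, List.map_map, List.map_map]; rfl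
    have hcore := core' d hd pl hplclose
    rw [hfst, hsnd] at hcore
    have hts : turnSum (List.map K t) ≤ M' := hKtc _ ⟨t, htchain, htmem, rfl⟩
    have hσt_chain : (t.map σ).Chain' (· ≤ ·) :=
      chain_map_mono hσm t (List.IsChain.imp (fun a b h => le_of_lt h) htchain) htmem
    have hσt_mem : ∀ x ∈ t.map σ, x ∈ Set.Icc (0:ℝ) 1 := by
      intro x hx
      rcases List.mem_map.1 hx with ⟨y, hy, rfl⟩
      exact hσmap (htmem y hy)
    have hLlen : polyLen (List.map L (List.map σ t)) ≤ len L := by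
      have h1 := polyLen_le_eVariation L (Set.Icc 0 1) (t.map σ) hσt_chain hσt_mem
      have h2 := ENNReal.toReal_mono hL h1
      rwa [ENNReal.toReal_ofReal (polyLen_nonneg _)] at h2
    calc polyLen (List.map K t)
        ≤ polyLen (List.map L (List.map σ t)) + d * (turnSum (List.map K t) + 2) := hcore
      _ ≤ len L + d * (M' + 2) := by nlinarith
  have hfin : ENNReal.ofReal (len L + d * (M' + 2)) ≠ ⊤ := ENNReal.ofReal_ne_top
  have := ENNReal.toReal_mono hfin hbound
  rwa [ENNReal.toReal_ofReal hRHS] at this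

end Main

section TheMain

variable {n : ℕ}

lemma frechetDist_nonneg (K L : ℝ → EuclideanSpace ℝ (Fin n)) : 0 ≤ frechetDist K L := by
  have : Nonempty {f : ℝ → ℝ // ContinuousOn f (Set.Icc 0 1) ∧
      StrictMonoOn f (Set.Icc 0 1) ∧ f 0 = 0 ∧ f 1 = 1} :=
    ⟨⟨id, continuousOn_id, fun a _ b _ h => h, rfl, rfl⟩⟩
  exact le_ciInf fun σ => Real.iSup_nonneg fun t => norm_nonneg _

theorem len_tendsto_of_frechet_tendsto'
    (γs : ℕ → ℝ → EuclideanSpace ℝ (Fin n)) (γ : ℝ → EuclideanSpace ℝ (Fin n))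
    (M : ℝ)
    (hc : ∀ i, ContinuousOn (γs i) (Set.Icc 0 1))
    (hγc : ContinuousOn γ (Set.Icc 0 1))
    (hr : ∀ i, BoundedVariationOn (γs i) (Set.Icc 0 1))
    (hγr : BoundedVariationOn γ (Set.Icc 0 1))
    (htc : ∀ i, ∀ x ∈ tcSet (γs i), x ≤ M)
    (hγtc : ∀ x ∈ tcSet γ, x ≤ M)
    (hfr : Filter.Tendsto (fun i => frechetDist (γs i) γ) Filter.atTop (nhds 0)) :
    Filter.Tendsto (fun i => len (γs i)) Filter.atTop (nhds (len γ)) := by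
  classical
  have hM0 : 0 ≤ M := hγtc 0 ⟨[], List.isChain_nil, by simp, rfl⟩
  have hM2 : (0:ℝ) < M + 2 := by linarith
  have key : ∀ i, |len (γs i) - len γ| ≤ frechetDist (γs i) γ * (M + 2) := by
    intro i
    set fd := frechetDist (γs i) γ with hfddef
    have hfd0 : 0 ≤ fd := frechetDist_nonneg _ _
    apply le_of_forall_pos_le_add
    intro ε' hε'
    set ε := ε' / (M + 2) with hεdef
    have hε : 0 < ε := div_pos hε' hM2
    haveI hne : Nonempty {f : ℝ → ℝ // ContinuousOn f (Set.Icc 0 1) ∧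
        StrictMonoOn f (Set.Icc 0 1) ∧ f 0 = 0 ∧ f 1 = 1} :=
      ⟨⟨id, continuousOn_id, fun a _ b _ h => h, rfl, rfl⟩⟩
    have hlt : fd < fd + ε := lt_add_of_pos_right fd hε
    obtain ⟨σ, hσlt⟩ := exists_lt_of_ciInf_lt (by rw [← hfddef] at *; exact hlt)
    set D := fd + ε with hDdef
    have hD0 : 0 ≤ D := by positivity
    -- σ maps [0,1] into [0,1]
    have h01 : (0:ℝ) ∈ Set.Icc (0:ℝ) 1 := Set.left_mem_Icc.2 zero_le_one
    have h11 : (1:ℝ) ∈ Set.Icc (0:ℝ) 1 := Set.right_mem_Icc.2 zero_le_one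
    have hσmono : MonotoneOn σ.1 (Set.Icc 0 1) := σ.2.2.1.monotoneOn
    have hσmap : Set.MapsTo σ.1 (Set.Icc 0 1) (Set.Icc 0 1) := by
      intro t ht
      constructor
      · have := hσmono h01 ht ht.1
        rwa [σ.2.2.2.1] at this
      · have := hσmono ht h11 ht.2
        rwa [σ.2.2.2.2] at this
    -- pointwise closeness
    have hbdd : BddAbove (Set.range fun t : Set.Icc (0:ℝ) 1 => ‖γs i t - γ (σ.1 t)‖) := by
      obtain ⟨C1, hC1⟩ := isCompact_Icc.exists_bound_of_continuousOn (hc i)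
      obtain ⟨C2, hC2⟩ := isCompact_Icc.exists_bound_of_continuousOn hγc
      refine ⟨C1 + C2, ?_⟩
      rintro x ⟨t, rfl⟩
      calc ‖γs i t - γ (σ.1 t)‖ ≤ ‖γs i t‖ + ‖γ (σ.1 t)‖ := norm_sub_le _ _
        _ ≤ C1 + C2 := add_le_add (hC1 t t.2) (hC2 _ (hσmap t.2))
    have hclose : ∀ t ∈ Set.Icc (0:ℝ) 1, ‖γs i t - γ (σ.1 t)‖ ≤ D := by
      intro t ht
      have := le_ciSup hbdd (⟨t, ht⟩ : Set.Icc (0:ℝ) 1)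
      exact le_of_lt (lt_of_le_of_lt this hσlt)
    -- the inverse reparametrization
    have hsurj : ∀ s ∈ Set.Icc (0:ℝ) 1, ∃ t ∈ Set.Icc (0:ℝ) 1, σ.1 t = s := by
      intro s hs
      have hsub := intermediate_value_Icc (zero_le_one) σ.2.1
      rw [σ.2.2.2.1, σ.2.2.2.2] at hsub
      rcases hsub hs with ⟨t, ht, hts⟩
      exact ⟨t, ht, hts⟩
    set τ : ℝ → ℝ := fun s =>
      if h : ∃ t ∈ Set.Icc (0:ℝ) 1, σ.1 t = s then h.choose else 0 with hτdef
    have hτspec : ∀ s ∈ Set.Icc (0:ℝ) 1, τ s ∈ Set.Icc (0:ℝ) 1 ∧ σ.1 (τ s) = s := by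
      intro s hs
      have h := hsurj s hs
      rw [hτdef]
      simp only [dif_pos h]
      exact ⟨h.choose_spec.1, h.choose_spec.2⟩
    have hτmap : Set.MapsTo τ (Set.Icc 0 1) (Set.Icc 0 1) := fun s hs => (hτspec s hs).1
    have hτmono : MonotoneOn τ (Set.Icc 0 1) := by
      intro s hs s' hs' hss'
      by_contra hcon
      push_neg at hcon
      have h1 := σ.2.2.1 (hτmap hs') (hτmap hs) hcon
      rw [(hτspec s hs).2, (hτspec s' hs').2] at h1
      exact absurd hss' (not_le.2 h1)
    have hclose2 : ∀ s ∈ Set.Icc (0:ℝ) 1, ‖γ s - γs i (τ s)‖ ≤ D := by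
      intro s hs
      rw [norm_sub_rev]
      have h := hclose (τ s) (hτmap hs)
      rwa [(hτspec s hs).2] at h
    have hA := len_le_aux (γs i) γ σ.1 D M hD0 hM0 hσmap hσmono (htc i) hγr hclose
    have hB := len_le_aux γ (γs i) τ D M hD0 hM0 hτmap hτmono hγtc (hr i) hclose2
    have habs : |len (γs i) - len γ| ≤ D * (M + 2) := abs_sub_le_iff.2 ⟨by linarith, by linarith⟩
    have hDε : D * (M + 2) = fd * (M + 2) + ε' := by
      rw [hDdef, hεdef, add_mul, div_mul_cancel₀ _ (ne_of_gt hM2)]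
    linarith [habs, hDε.le]
  have hsq : Filter.Tendsto (fun i => |len (γs i) - len γ|) Filter.atTop (nhds 0) := by
    apply squeeze_zero (g := fun i => frechetDist (γs i) γ * (M + 2))
      (fun i => abs_nonneg _) key
    simpa using hfr.mul_const (M + 2)
  rw [tendsto_iff_dist_tendsto_zero]
  simpa [Real.dist_eq] using hsq

end TheMain

/-- If continuous rectifiable curves `γᵢ : [0,1] → ℝⁿ`
converge to `γ` in Fréchet distance and all the curves have total curvature
bounded above by a common constant `M`, then `len γᵢ → len γ`. -/
theorem len_tendsto_of_frechet_tendsto {n : ℕ}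
    (γs : ℕ → ℝ → EuclideanSpace ℝ (Fin n)) (γ : ℝ → EuclideanSpace ℝ (Fin n))
    (M : ℝ)
    (hc : ∀ i, ContinuousOn (γs i) (Set.Icc 0 1))
    (hγc : ContinuousOn γ (Set.Icc 0 1))
    (hr : ∀ i, BoundedVariationOn (γs i) (Set.Icc 0 1))
    (hγr : BoundedVariationOn γ (Set.Icc 0 1))
    (htc : ∀ i, ∀ x ∈ tcSet (γs i), x ≤ M)
    (hγtc : ∀ x ∈ tcSet γ, x ≤ M)
    (hfr : Filter.Tendsto (fun i => frechetDist (γs i) γ) Filter.atTop (nhds 0)) :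
    Filter.Tendsto (fun i => len (γs i)) Filter.atTop (nhds (len γ)) :=
  len_tendsto_of_frechet_tendsto' γs γ M hc hγc hr hγr htc hγtc hfr
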